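/- Let K be a unital based ring of finite rank with basis {b_i}_{i∈I} and involution i ↦ i*, and let R be the ℚ-linear operator on K ⊗_ℤ ℚ given by left multiplication by the element Σ_{i∈I} b_i·b_{i*}. Then R is invertible and the trace of R⁻¹ equals 1. -/

import Mathlib

/-- A unital based ring of finite rank, presented by its structure constants:
a ring free of finite rank over ℤ with distinguished basis `{b_i}_{i ∈ I}` containing
the unit, nonnegative structure constants `c i j k` (so `b_i · b_j = Σ_k c i j k • b_k`),
and an involution `i ↦ i*` of `I` inducing an anti-automorphism of the ring and such
that the coefficient of `1` in `b_i · b_j` is `1` if `j = i*` and `0` otherwise. -/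
structure BasedRingData (I : Type*) [Fintype I] [DecidableEq I] where
  /-- structure constants: `b_i · b_j = Σ_k (c i j k) • b_k` -/
  c : I → I → I → ℤ
  /-- the index of the unit element among the basis -/
  one : I
  /-- the involution `i ↦ i*` -/
  star : I → I
  nonneg : ∀ i j k, 0 ≤ c i j k
  one_mul : ∀ i k, c one i k = if k = i then 1 else 0
  mul_one : ∀ i k, c i one k = if k = i then 1 else 0
  assoc : ∀ i j k t, ∑ s, c i j s * c s k t = ∑ s, c j k s * c i s t
  star_involutive : Function.Involutive star
  /-- the involution induces an anti-automorphism `b_i ↦ b_{i*}` -/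
  star_anti : ∀ i j k, c i j k = c (star j) (star i) (star k)
  /-- the coefficient of `1` in `b_i · b_j` is `1` if `j = i*` and `0` otherwise -/
  coeff_one : ∀ i j, c i j one = if j = star i then 1 else 0

set_option linter.unusedSectionVars false

namespace Stmt3Aux
open Matrix
variable {I : Type*} [Fintype I] [DecidableEq I] (K : BasedRingData I)

/-- cyclic symmetry of the structure constants -/
lemma cyc (i j k : I) : K.c i j k = K.c j (K.star k) (K.star i) := by
  have h := K.assoc i j (K.star k) K.one
  simp only [K.coeff_one, mul_ite, mul_one, mul_zero,
    K.star_involutive.injective.eq_iff] at h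
  rw [Finset.sum_ite_eq Finset.univ k (K.c i j),
      Finset.sum_ite_eq' Finset.univ (K.star i) (K.c j (K.star k))] at h
  simpa using h

lemma key (i j s : I) : K.c (K.star i) j s = K.c i s j := by
  rw [K.star_anti (K.star i) j s, K.star_involutive i]
  rw [cyc K (K.star j) i (K.star s), K.star_involutive s, K.star_involutive j]

/-- the matrix of left multiplication by the element with coordinates `w` -/
def Phi (w : I → ℚ) : Matrix I I ℚ := Matrix.of fun t j => ∑ s, w s * (K.c s j t : ℚ)

lemma Phi_apply (w : I → ℚ) (t j : I) : Phi K w t j = ∑ s, w s * (K.c s j t : ℚ) := rfl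

/-- the coordinates of the product of elements with coordinates `v`, `w` -/
def pr (v w : I → ℚ) : I → ℚ := fun k => ∑ s, ∑ r, v s * w r * (K.c s r k : ℚ)

lemma Phi_one : Phi K (fun t => if t = K.one then 1 else 0) = 1 := by
  ext t j
  simp only [Phi_apply, ite_mul, one_mul, zero_mul,
    Finset.sum_ite_eq' Finset.univ K.one, Finset.mem_univ, if_true]
  rw [K.one_mul]
  simp [Matrix.one_apply]

lemma Phi_mul (v w : I → ℚ) : Phi K v * Phi K w = Phi K (pr K v w) := by
  ext t j
  show (∑ u, (∑ s, v s * (K.c s u t : ℚ)) * ∑ r, w r * (K.c r j u : ℚ))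
      = ∑ s, (∑ a, ∑ r, v a * w r * (K.c a r s : ℚ)) * (K.c s j t : ℚ)
  calc (∑ u, (∑ s, v s * (K.c s u t : ℚ)) * ∑ r, w r * (K.c r j u : ℚ))
      = ∑ u, ∑ s, ∑ r, v s * w r * ((K.c r j u : ℚ) * (K.c s u t : ℚ)) := by
        refine Finset.sum_congr rfl fun u _ => ?_
        rw [Finset.sum_mul_sum]
        exact Finset.sum_congr rfl fun s _ => Finset.sum_congr rfl fun r _ => by ring
    _ = ∑ s, ∑ r, v s * w r * ∑ u, ((K.c r j u : ℚ) * (K.c s u t : ℚ)) := by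
        rw [Finset.sum_comm]
        refine Finset.sum_congr rfl fun s _ => ?_
        rw [Finset.sum_comm]
        exact Finset.sum_congr rfl fun r _ => (Finset.mul_sum _ _ _).symm
    _ = ∑ s, ∑ r, v s * w r * ∑ u, ((K.c s r u : ℚ) * (K.c u j t : ℚ)) := by
        refine Finset.sum_congr rfl fun s _ => Finset.sum_congr rfl fun r _ => ?_
        congr 1
        exact_mod_cast (K.assoc s r j t).symm
    _ = ∑ s, ∑ r, ∑ u, (v s * w r * (K.c s r u : ℚ)) * (K.c u j t : ℚ) := by
        refine Finset.sum_congr rfl fun s _ => Finset.sum_congr rfl fun r _ => ?_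
        rw [Finset.mul_sum]
        exact Finset.sum_congr rfl fun u _ => by ring
    _ = ∑ s, ∑ u, ∑ r, (v s * w r * (K.c s r u : ℚ)) * (K.c u j t : ℚ) := by
        exact Finset.sum_congr rfl fun s _ => Finset.sum_comm
    _ = ∑ u, ∑ s, ∑ r, (v s * w r * (K.c s r u : ℚ)) * (K.c u j t : ℚ) :=
        Finset.sum_comm
    _ = ∑ s, (∑ a, ∑ r, v a * w r * (K.c a r s : ℚ)) * (K.c s j t : ℚ) := by
        refine Finset.sum_congr rfl fun u _ => ?_
        rw [Finset.sum_mul]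
        exact Finset.sum_congr rfl fun a _ => (Finset.sum_mul _ _ _).symm


/-- the coordinate vector of `z = Σ_i b_i b_{i*}` -/
def z : I → ℚ := fun t => ∑ i, (K.c i (K.star i) t : ℚ)

/-- the matrix of left multiplication by `b_i` -/
def M (i : I) : Matrix I I ℚ := Matrix.of fun t s => (K.c i s t : ℚ)

lemma trace_Phi (w : I → ℚ) :
    (Phi K w).trace = (Phi K w * Phi K (z K)) K.one K.one := by
  rw [Phi_mul]
  have hrhs : Phi K (pr K w (z K)) K.one K.one = ∑ s, w s * z K (K.star s) := by
    rw [Phi_apply]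
    simp only [K.mul_one, Int.cast_ite, Int.cast_one, Int.cast_zero, mul_ite, mul_one,
      mul_zero]
    rw [Finset.sum_ite_eq Finset.univ K.one (pr K w (z K))]
    simp only [Finset.mem_univ, if_true, pr]
    refine Finset.sum_congr rfl fun s _ => ?_
    simp only [K.coeff_one, Int.cast_ite, Int.cast_one, Int.cast_zero, mul_ite, mul_one,
      mul_zero]
    rw [Finset.sum_ite_eq' Finset.univ (K.star s) (fun r => w s * z K r)]
    simp
  rw [hrhs, Matrix.trace]
  simp only [Matrix.diag_apply, Phi_apply]
  rw [Finset.sum_comm]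
  refine Finset.sum_congr rfl fun s _ => ?_
  rw [← Finset.mul_sum]
  congr 1
  unfold z
  refine Finset.sum_congr rfl fun j _ => ?_
  exact_mod_cast cyc K s j j


lemma R_eq_Phi (R : Matrix I I ℚ)
    (hR : ∀ t j, R t j = ∑ i, ∑ s, (K.c i (K.star i) s : ℚ) * (K.c s j t : ℚ)) :
    R = Phi K (z K) := by
  ext t j
  rw [hR, Phi_apply]
  rw [Finset.sum_comm]
  refine Finset.sum_congr rfl fun s _ => ?_
  rw [z, Finset.sum_mul]

lemma R_eq_sum (R : Matrix I I ℚ)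
    (hR : ∀ t j, R t j = ∑ i, ∑ s, (K.c i (K.star i) s : ℚ) * (K.c s j t : ℚ)) :
    R = ∑ i, M K i * (M K i)ᵀ := by
  ext t j
  rw [hR t j, Matrix.sum_apply]
  refine Finset.sum_congr rfl fun i _ => ?_
  simp only [Matrix.mul_apply, M, Matrix.transpose_apply, Matrix.of_apply]
  have h : (∑ s, (K.c i (K.star i) s : ℚ) * K.c s j t)
      = ∑ s, (K.c (K.star i) j s : ℚ) * K.c i s t := by
    exact_mod_cast K.assoc i (K.star i) j t
  rw [h]
  refine Finset.sum_congr rfl fun s _ => ?_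
  rw [key K i j s]
  ring

lemma M_one : M K K.one = 1 := by
  ext t s
  simp [M, K.one_mul, Matrix.one_apply]

lemma sum_mulVec {J : Type*} (s : Finset J) (A : J → Matrix I I ℚ) (v : I → ℚ) :
    (∑ i ∈ s, A i) *ᵥ v = ∑ i ∈ s, A i *ᵥ v := by
  ext t
  simp only [Matrix.mulVec, dotProduct, Matrix.sum_apply, Finset.sum_apply,
    Finset.sum_mul]
  rw [Finset.sum_comm]

lemma dotProduct_sum {J : Type*} (s : Finset J) (v : I → ℚ) (w : J → I → ℚ) :
    v ⬝ᵥ (∑ i ∈ s, w i) = ∑ i ∈ s, v ⬝ᵥ w i := by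
  simp only [dotProduct, Finset.sum_apply, Finset.mul_sum]
  rw [Finset.sum_comm]

lemma pr_z (w : I → ℚ) : pr K (z K) w = (Phi K (z K)) *ᵥ w := by
  funext k
  simp only [pr, Matrix.mulVec, dotProduct, Phi_apply, Finset.sum_mul]
  rw [Finset.sum_comm]
  exact Finset.sum_congr rfl fun s _ => Finset.sum_congr rfl fun r _ => by ring

end Stmt3Aux

open Matrix

/-- for a unital based ring `K` of finite rank, the matrix (over ℚ) of the
operator of left multiplication by `Σ_i b_i · b_{i*}` on `K ⊗ ℚ` in the distinguished
basis is invertible, and the trace of its inverse equals `1`. -/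
theorem stmt_3 (I : Type*) [Fintype I] [DecidableEq I] (K : BasedRingData I)
    (R : Matrix I I ℚ)
    (hR : ∀ t j, R t j = ∑ i, ∑ s, (K.c i (K.star i) s : ℚ) * (K.c s j t : ℚ)) :
    IsUnit R ∧ Matrix.trace R⁻¹ = 1 := open Matrix Stmt3Aux in by
  classical
  have hRsum : R = ∑ i, M K i * (M K i)ᵀ := R_eq_sum K R hR
  have hdet : R.det ≠ 0 := by
    intro h0
    obtain ⟨v, hv0, hv⟩ := (Matrix.exists_mulVec_eq_zero_iff).mpr h0
    have hq : v ⬝ᵥ R *ᵥ v = ∑ i, ((M K i)ᵀ *ᵥ v) ⬝ᵥ ((M K i)ᵀ *ᵥ v) := by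
      rw [hRsum, Stmt3Aux.sum_mulVec, Stmt3Aux.dotProduct_sum]
      refine Finset.sum_congr rfl fun i _ => ?_
      rw [← Matrix.mulVec_mulVec, Matrix.dotProduct_mulVec, ← Matrix.mulVec_transpose]
    rw [hv, dotProduct_zero] at hq
    have hnn : ∀ i ∈ Finset.univ (α := I),
        0 ≤ ((M K i)ᵀ *ᵥ v) ⬝ᵥ ((M K i)ᵀ *ᵥ v) := fun i _ =>
      Finset.sum_nonneg fun t _ => mul_self_nonneg _
    have hzero := (Finset.sum_eq_zero_iff_of_nonneg hnn).mp hq.symm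
    have h1 := hzero K.one (Finset.mem_univ _)
    rw [M_one, Matrix.transpose_one, Matrix.one_mulVec] at h1
    have : v = 0 := by
      funext t
      have := (Finset.sum_eq_zero_iff_of_nonneg
        (fun t _ => mul_self_nonneg (v t))).mp h1 t (Finset.mem_univ _)
      exact mul_self_eq_zero.mp this
    exact hv0 this
  have hunit : IsUnit R := (Matrix.isUnit_iff_isUnit_det R).mpr (isUnit_iff_ne_zero.mpr hdet)
  refine ⟨hunit, ?_⟩
  have hPhiz : R = Phi K (z K) := R_eq_Phi K R hR
  set e : I → ℚ := fun t => if t = K.one then 1 else 0 with he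
  set w : I → ℚ := R⁻¹ *ᵥ e with hw
  have hRw : R *ᵥ w = e := by
    rw [hw, Matrix.mulVec_mulVec, Matrix.mul_nonsing_inv R (isUnit_iff_ne_zero.mpr hdet), Matrix.one_mulVec]
  have hright : R * Phi K w = 1 := by
    conv_lhs => rw [hPhiz, Phi_mul, pr_z, ← hPhiz, hRw]
    exact Phi_one K
  have hinv : R⁻¹ = Phi K w := Matrix.inv_eq_right_inv hright
  rw [hinv, trace_Phi, ← hPhiz, ← hinv, Matrix.nonsing_inv_mul R (isUnit_iff_ne_zero.mpr hdet), Matrix.one_apply_eq]
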